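/- For every integer k ≥ 0: (i) |∂₁ψ(x,y)| ≤ (1 + h/λ)·(h/λ)^k for every x ∈ [0,π] and every y ∈ [y_k, y_{k+1}), where ∂₁ψ is the partial derivative of ψ in the first variable; (ii) for every x ∈ [0,π] and every y ∈ (y_k, y_{k+1}), the partial derivative ∂₂ψ(x,y) of ψ in the second variable exists and satisfies |∂₂ψ(x,y)| ≤ (4/a)·(h/a)^k. -/

import Mathlib

open Real MeasureTheory Set Filter

noncomputable section

namespace StokesCounterexample

/-- `ySeq a k = Σ_{j=1}^k a^j` (so `ySeq a 0 = 0`). -/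
def ySeq (a : ℝ) (k : ℕ) : ℝ := ∑ j ∈ Finset.range k, a ^ (j + 1)

/-- `yInf a = Σ_{j=1}^∞ a^j = a / (1 - a)`. -/
def yInf (a : ℝ) : ℝ := a / (1 - a)

/-- `fSeq h l 0 = 0` and `fSeq h l k x = h^k · sin (x / l^k)` for `k ≥ 1`. -/
def fSeq (h l : ℝ) (k : ℕ) (x : ℝ) : ℝ :=
  if k = 0 then 0 else h ^ k * Real.sin (x / l ^ k)

open Classical in
/-- The interpolation `ψ(x,y) = (1 - φ_k(y))·f_k(x) + φ_k(y)·f_{k+1}(x)` for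
`y ∈ [y_k, y_{k+1})`, where `φ_k(y) = φ((y - y_k)/a^(k+1))`, extended by `0`
outside of `⋃_k [y_k, y_{k+1})` (in particular `ψ(x, y_∞) = 0`). -/
def psi (a h l : ℝ) (φ : ℝ → ℝ) (x y : ℝ) : ℝ :=
  if hk : ∃ k : ℕ, ySeq a k ≤ y ∧ y < ySeq a (k + 1) then
    (1 - φ ((y - ySeq a hk.choose) / a ^ (hk.choose + 1))) * fSeq h l hk.choose x
      + φ ((y - ySeq a hk.choose) / a ^ (hk.choose + 1)) * fSeq h l (hk.choose + 1) x
  else 0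

/-- The partial derivative of `ψ` in the first variable. -/
def psi₁ (a h l : ℝ) (φ : ℝ → ℝ) (x y : ℝ) : ℝ :=
  deriv (fun t => psi a h l φ t y) x

/-- The partial derivative of `ψ` in the second variable. -/
def psi₂ (a h l : ℝ) (φ : ℝ → ℝ) (x y : ℝ) : ℝ :=
  deriv (fun s => psi a h l φ x s) y

/-- The arc length `L(x,y) = ∫_0^x √(1 + (∂₁ψ(t,y))²) dt`. -/
def arc (a h l : ℝ) (φ : ℝ → ℝ) (x y : ℝ) : ℝ :=
  ∫ t in (0:ℝ)..x, Real.sqrt (1 + psi₁ a h l φ t y ^ 2)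

/-- The length `L(y) = L(π, y)` of the section of the graph of `ψ` at height `y`. -/
def len (a h l : ℝ) (φ : ℝ → ℝ) (y : ℝ) : ℝ := arc a h l φ π y

lemma ySeq_strictMono {a : ℝ} (ha : 0 < a) : StrictMono (ySeq a) := by
  apply strictMono_nat_of_lt_succ
  intro n
  have : ySeq a (n + 1) = ySeq a n + a ^ (n + 1) := by
    simp [ySeq, Finset.sum_range_succ]
  rw [this]
  have : 0 < a ^ (n + 1) := pow_pos ha _
  linarith

lemma strip_unique {a : ℝ} (ha : 0 < a) {y : ℝ} {j k : ℕ}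
    (h1 : ySeq a j ≤ y) (h2 : y < ySeq a (j + 1))
    (h3 : ySeq a k ≤ y) (h4 : y < ySeq a (k + 1)) : j = k := by
  by_contra hne
  rcases lt_or_gt_of_ne hne with hlt | hlt
  · exact absurd (((ySeq_strictMono ha).monotone (Nat.succ_le_of_lt hlt)).trans h3)
      (not_le.2 h2)
  · exact absurd (((ySeq_strictMono ha).monotone (Nat.succ_le_of_lt hlt)).trans h1)
      (not_le.2 h4)

lemma psi_eq {a : ℝ} (ha : 0 < a) (h l : ℝ) (φ : ℝ → ℝ) (x : ℝ) {k : ℕ} {y : ℝ}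
    (h1 : ySeq a k ≤ y) (h2 : y < ySeq a (k + 1)) :
    psi a h l φ x y = (1 - φ ((y - ySeq a k) / a ^ (k + 1))) * fSeq h l k x
      + φ ((y - ySeq a k) / a ^ (k + 1)) * fSeq h l (k + 1) x := by
  have hk : ∃ j : ℕ, ySeq a j ≤ y ∧ y < ySeq a (j + 1) := ⟨k, h1, h2⟩
  have hcs := hk.choose_spec
  have heq : hk.choose = k := strip_unique ha hcs.1 hcs.2 h1 h2
  rw [psi, dif_pos hk, heq]

lemma fSeq_hasDerivAt (h l : ℝ) (k : ℕ) (x : ℝ) :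
    HasDerivAt (fun t => fSeq h l k t)
      (if k = 0 then 0 else h ^ k * Real.cos (x / l ^ k) / l ^ k) x := by
  rcases eq_or_ne k 0 with rfl | hk
  · simpa [fSeq] using (hasDerivAt_const x (0:ℝ))
  · simp only [fSeq, if_neg hk]
    have h1 : HasDerivAt (fun t : ℝ => t / l ^ k) (1 / l ^ k) x := by
      simpa using (hasDerivAt_id x).div_const (l ^ k)
    have h2 := ((Real.hasDerivAt_sin (x / l ^ k)).comp x h1).const_mul (h ^ k)
    refine h2.congr_deriv ?_
    ring

lemma fSeq_deriv_abs_le {h l : ℝ} (hh : 0 ≤ h) (hl : 0 < l) (k : ℕ) (x : ℝ) :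
    |if k = 0 then (0:ℝ) else h ^ k * Real.cos (x / l ^ k) / l ^ k| ≤ (h / l) ^ k := by
  rcases eq_or_ne k 0 with rfl | hk
  · simp
  · rw [if_neg hk, div_pow, abs_div, abs_mul, abs_pow, abs_pow, abs_of_nonneg hh,
      abs_of_nonneg hl.le]
    gcongr
    exact mul_le_of_le_one_right (pow_nonneg hh k) (Real.abs_cos_le_one _)

lemma fSeq_abs_le {h l : ℝ} (hh : 0 ≤ h) (k : ℕ) (x : ℝ) :
    |fSeq h l k x| ≤ h ^ k := by
  rcases eq_or_ne k 0 with rfl | hk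
  · simp [fSeq]
  · rw [fSeq, if_neg hk, abs_mul, abs_pow, abs_of_nonneg hh]
    calc h ^ k * |Real.sin (x / l ^ k)| ≤ h ^ k * 1 := by
          exact mul_le_mul_of_nonneg_left (Real.abs_sin_le_one _) (pow_nonneg hh k)
      _ = h ^ k := mul_one _


/-- Bounds on the partial derivatives of `ψ` on the strip `[y_k, y_{k+1})`:
`|∂₁ψ| ≤ (1 + h/λ)(h/λ)^k`, and on the open strip `∂₂ψ` exists with
`|∂₂ψ| ≤ (4/a)(h/a)^k`. -/
theorem psi_derivative_bounds (a h l : ℝ) (ha0 : 0 < a) (ha1 : a < 1) (hh0 : 0 < h) (hh1 : h < 1)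
    (hl0 : 0 < l) (hl1 : l < 1) (hlN : ∃ N : ℕ, 0 < N ∧ l = 1 / N)
    (φ : ℝ → ℝ) (hφsmooth : ContDiff ℝ (⊤ : ℕ∞) φ) (hφmono : Monotone φ)
    (hφ01 : ∀ t, φ t ∈ Set.Icc (0:ℝ) 1)
    (hφd0 : ∀ t, 0 ≤ deriv φ t) (hφd2 : ∀ t, deriv φ t ≤ 2)
    (hφ0 : ∃ ε > 0, ∀ t < ε, φ t = 0) (hφ1 : ∃ ε > 0, ∀ t > 1 - ε, φ t = 1)
    (k : ℕ) :
    (∀ x ∈ Icc (0:ℝ) π, ∀ y : ℝ, ySeq a k ≤ y → y < ySeq a (k + 1) →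
      DifferentiableAt ℝ (fun t => psi a h l φ t y) x ∧
      |psi₁ a h l φ x y| ≤ (1 + h / l) * (h / l) ^ k) ∧
    (∀ x ∈ Icc (0:ℝ) π, ∀ y : ℝ, ySeq a k < y → y < ySeq a (k + 1) →
      ∃ d : ℝ, HasDerivAt (fun s => psi a h l φ x s) d y ∧ |d| ≤ 4 / a * (h / a) ^ k) := by
  constructor
  · intro x hx y hy1 hy2
    set c := φ ((y - ySeq a k) / a ^ (k + 1)) with hc
    have hc01 := hφ01 ((y - ySeq a k) / a ^ (k + 1))
    have hfun : (fun t => psi a h l φ t y)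
        = fun t => (1 - c) * fSeq h l k t + c * fSeq h l (k + 1) t := by
      funext t; exact psi_eq ha0 h l φ t hy1 hy2
    set dk := (if k = 0 then (0:ℝ) else h ^ k * Real.cos (x / l ^ k) / l ^ k) with hdk
    set dk1 := (if k + 1 = 0 then (0:ℝ)
      else h ^ (k + 1) * Real.cos (x / l ^ (k + 1)) / l ^ (k + 1)) with hdk1
    have hd : HasDerivAt (fun t => psi a h l φ t y) ((1 - c) * dk + c * dk1) x := by
      rw [hfun]
      exact ((fSeq_hasDerivAt h l k x).const_mul (1 - c)).add
        ((fSeq_hasDerivAt h l (k + 1) x).const_mul c)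
    refine ⟨hd.differentiableAt, ?_⟩
    rw [psi₁, hd.deriv]
    have b1 := fSeq_deriv_abs_le hh0.le hl0 k x
    have b2 := fSeq_deriv_abs_le hh0.le hl0 (k + 1) x
    rw [← hdk] at b1
    rw [← hdk1] at b2
    have h1c : |1 - c| ≤ 1 := abs_le.2 ⟨by linarith [hc01.1, hc01.2], by linarith [hc01.1]⟩
    have hcabs : |c| ≤ 1 := abs_le.2 ⟨by linarith [hc01.1], hc01.2⟩
    calc |(1 - c) * dk + c * dk1| ≤ |1 - c| * |dk| + |c| * |dk1| := by
          rw [← abs_mul, ← abs_mul]; exact abs_add_le _ _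
      _ ≤ 1 * (h / l) ^ k + 1 * (h / l) ^ (k + 1) := by
          gcongr <;> positivity
      _ = (1 + h / l) * (h / l) ^ k := by rw [pow_succ]; ring
  · intro x hx y hy1 hy2
    set u := (y - ySeq a k) / a ^ (k + 1) with hu
    have hφdiff : HasDerivAt φ (deriv φ u) u :=
      (hφsmooth.differentiable (by simp) u).hasDerivAt
    have hinner : HasDerivAt (fun s => (s - ySeq a k) / a ^ (k + 1)) (1 / a ^ (k + 1)) y := by
      simpa using ((hasDerivAt_id y).sub_const (ySeq a k)).div_const (a ^ (k + 1))
    have hcomp : HasDerivAt (fun s => φ ((s - ySeq a k) / a ^ (k + 1)))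
        (deriv φ u * (1 / a ^ (k + 1))) y := hφdiff.comp y hinner
    set Fk := fSeq h l k x with hFk
    set Fk1 := fSeq h l (k + 1) x with hFk1
    set d := deriv φ u * (1 / a ^ (k + 1)) * (Fk1 - Fk) with hd
    have hg : HasDerivAt (fun s => (1 - φ ((s - ySeq a k) / a ^ (k + 1))) * Fk
        + φ ((s - ySeq a k) / a ^ (k + 1)) * Fk1) d y := by
      have h1 := ((hasDerivAt_const y (1:ℝ)).sub hcomp).mul_const Fk
      have h2 := hcomp.mul_const Fk1
      have := h1.add h2
      refine this.congr_deriv ?_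
      simp only [hd]; ring
    have hev : (fun s => psi a h l φ x s) =ᶠ[nhds y]
        (fun s => (1 - φ ((s - ySeq a k) / a ^ (k + 1))) * Fk
          + φ ((s - ySeq a k) / a ^ (k + 1)) * Fk1) := by
      filter_upwards [Ioo_mem_nhds hy1 hy2] with s hs
      exact psi_eq ha0 h l φ x hs.1.le hs.2
    refine ⟨d, hg.congr_of_eventuallyEq hev, ?_⟩
    have hak : (0:ℝ) < a ^ (k + 1) := pow_pos ha0 _
    have hφu2 : |deriv φ u| ≤ 2 := abs_le.2 ⟨by linarith [hφd0 u], hφd2 u⟩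
    have hF : |Fk1 - Fk| ≤ 2 * h ^ k := by
      have b1 : |Fk| ≤ h ^ k := fSeq_abs_le hh0.le k x
      have b2 : |Fk1| ≤ h ^ (k + 1) := fSeq_abs_le hh0.le (k + 1) x
      have : h ^ (k + 1) ≤ h ^ k :=
        pow_le_pow_of_le_one hh0.le hh1.le (Nat.le_succ k)
      calc |Fk1 - Fk| ≤ |Fk1| + |Fk| := abs_sub _ _
        _ ≤ 2 * h ^ k := by linarith
    calc |d| = |deriv φ u| * |1 / a ^ (k + 1)| * |Fk1 - Fk| := by
          rw [hd, abs_mul, abs_mul]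
      _ ≤ 2 * (1 / a ^ (k + 1)) * (2 * h ^ k) := by
          rw [abs_of_pos (by positivity : (0:ℝ) < 1 / a ^ (k + 1))]
          gcongr
      _ = 4 / a * (h / a) ^ k := by
          rw [div_pow]
          field_simp
          ring

end StokesCounterexample
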